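/- Let E ⊆ 𝕋^N be a nonempty open set with μ(E) = m > 0 and μ(closure(E)) = μ(E). Let (δ_n) be a sequence of positive reals with δ_n → 0, and let (E_n) be a sequence of measurable subsets of 𝕋^N with μ(E_n) = m and closure(E_n) ⊆ (E)_{δ_n} for every n. Then the Hausdorff distance d_H(closure(E_n), closure(E)) tends to 0 as n → ∞. -/

import Mathlib

open MeasureTheory

noncomputable section

/-- The integer lattice `ℤ^N` inside Euclidean space `ℝ^N`. -/
abbrev torusLattice (N : ℕ) : AddSubgroup (EuclideanSpace ℝ (Fin N)) :=
  (Submodule.span ℤ (Set.range ((EuclideanSpace.basisFun (Fin N) ℝ).toBasis))).toAddSubgroup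

instance (N : ℕ) : IsClosed ((torusLattice N : Set (EuclideanSpace ℝ (Fin N)))) :=
  AddSubgroup.isClosed_of_discrete

/-- The flat torus `𝕋^N = ℝ^N / ℤ^N`, equipped with the quotient metric
`dist x̄ ȳ = min_{z ∈ ℤ^N} |x - y + z|` coming from the quotient norm. -/
abbrev Torus (N : ℕ) := EuclideanSpace ℝ (Fin N) ⧸ torusLattice N

/-- The canonical quotient map `ℝ^N → 𝕋^N`. -/
abbrev torusQuot (N : ℕ) : EuclideanSpace ℝ (Fin N) → Torus N := QuotientAddGroup.mk

/-- The Haar probability measure on the flat torus, defined as the push-forward of the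
Lebesgue measure on the fundamental domain `[0,1)^N`. -/
def torusMeasure (N : ℕ) : Measure (Torus N) :=
  Measure.map (torusQuot N)
    (volume.restrict {x : EuclideanSpace ℝ (Fin N) | ∀ i, x i ∈ Set.Ico (0 : ℝ) 1})

section Auxiliary

/-- The fundamental box `[0,1)^N`. -/
def torusBox (N : ℕ) : Set (EuclideanSpace ℝ (Fin N)) := {x | ∀ i, x i ∈ Set.Ico (0:ℝ) 1}

lemma measurable_torusQuot (N : ℕ) : Measurable (torusQuot N) := fun _ a => a

lemma torusMeasure_apply {N : ℕ} {A : Set (Torus N)} (hA : MeasurableSet A) :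
    torusMeasure N A = volume (torusQuot N ⁻¹' A ∩ torusBox N) := by
  rw [torusMeasure, Measure.map_apply (measurable_torusQuot N) hA,
    Measure.restrict_apply ((measurable_torusQuot N) hA)]
  rfl

lemma torusLattice_countable (N : ℕ) :
    (torusLattice N : Set (EuclideanSpace ℝ (Fin N))).Countable := by
  have : Countable (Submodule.span ℤ
      (Set.range ((EuclideanSpace.basisFun (Fin N) ℝ).toBasis))) := by infer_instance
  exact Set.countable_coe_iff.1 this

lemma mem_lattice_iff {N : ℕ} (x : EuclideanSpace ℝ (Fin N)) :
    x ∈ torusLattice N ↔ ∀ i, ∃ k : ℤ, (k : ℝ) = x i := by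
  rw [Submodule.mem_toAddSubgroup, Module.Basis.mem_span_iff_repr_mem]
  simp only [OrthonormalBasis.coe_toBasis_repr_apply, EuclideanSpace.basisFun_repr,
    algebraMap_int_eq, Int.coe_castRingHom, Set.mem_range]

lemma exists_lattice_sub_mem_box {N : ℕ} (x : EuclideanSpace ℝ (Fin N)) :
    ∃ k ∈ torusLattice N, x - k ∈ torusBox N := by
  set k : EuclideanSpace ℝ (Fin N) := WithLp.toLp 2 (fun i => (⌊x i⌋ : ℝ)) with hk
  refine ⟨k, (mem_lattice_iff _).2 fun i => ⟨⌊x i⌋, rfl⟩, fun i => ?_⟩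
  have h1 : (x - k) i = Int.fract (x i) := rfl
  rw [h1]
  exact ⟨Int.fract_nonneg _, Int.fract_lt_one _⟩

lemma torusMeasure_pos_of_isOpen {N : ℕ} {U : Set (Torus N)} (hU : IsOpen U)
    (hne : U.Nonempty) : 0 < torusMeasure N U := by
  rw [torusMeasure_apply hU.measurableSet]
  set P := torusQuot N ⁻¹' U with hPdef
  by_contra h
  push_neg at h
  have h0 : volume (P ∩ torusBox N) = 0 := le_antisymm (by simpa using h) zero_le
  have hPper : ∀ k ∈ torusLattice N, ∀ z : EuclideanSpace ℝ (Fin N), z ∈ P → z - k ∈ P := by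
    intro k hk z hz
    have : torusQuot N (z - k) = torusQuot N z := by
      refine QuotientAddGroup.eq_iff_sub_mem.2 ?_
      simpa using neg_mem hk
    simpa [hPdef, Set.mem_preimage, this] using hz
  have hcover : P ⊆ ⋃ k ∈ (torusLattice N : Set (EuclideanSpace ℝ (Fin N))),
      (fun z => z - k) ⁻¹' (P ∩ torusBox N) := by
    intro z hz
    obtain ⟨k, hk, hbox⟩ := exists_lattice_sub_mem_box z
    exact Set.mem_biUnion hk ⟨hPper k hk z hz, hbox⟩
  have hnull : volume (⋃ k ∈ (torusLattice N : Set (EuclideanSpace ℝ (Fin N))),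
      (fun z => z - k) ⁻¹' (P ∩ torusBox N)) = 0 := by
    rw [measure_biUnion_null_iff (torusLattice_countable N)]
    intro k _
    have : volume ((fun z => z - k) ⁻¹' (P ∩ torusBox N)) = volume (P ∩ torusBox N) := by
      simp only [sub_eq_add_neg]
      exact measure_preimage_add_right volume (-k) _
    rw [this, h0]
  have hPnull : volume P = 0 := measure_mono_null hcover hnull
  have hPopen : IsOpen P := hU.preimage continuous_quotient_mk'
  have hPne : P.Nonempty := by
    obtain ⟨q, hq⟩ := hne
    obtain ⟨x, rfl⟩ := QuotientAddGroup.mk_surjective q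
    exact ⟨x, hq⟩
  exact hPopen.measure_ne_zero volume hPne hPnull

lemma torusBox_subset_ball (N : ℕ) : torusBox N ⊆ Metric.closedBall 0 (Real.sqrt N) := by
  intro x hx
  rw [Metric.mem_closedBall, dist_zero_right, EuclideanSpace.norm_eq]
  have hsum : (∑ i : Fin N, ‖x i‖ ^ 2) ≤ (N : ℝ) := by
    calc (∑ i : Fin N, ‖x i‖ ^ 2) ≤ ∑ _i : Fin N, (1:ℝ) := by
          refine Finset.sum_le_sum fun i _ => ?_
          have h := hx i
          have habs : |x i| ≤ 1 := abs_le.2 ⟨by linarith [h.1], le_of_lt h.2⟩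
          calc ‖x i‖ ^ 2 = |x i| ^ 2 := by rw [Real.norm_eq_abs]
            _ ≤ 1 := by nlinarith [abs_nonneg (x i)]
      _ = (N : ℝ) := by simp
  exact Real.sqrt_le_sqrt hsum

instance torusMeasure_finite (N : ℕ) : IsFiniteMeasure (torusMeasure N) := by
  refine ⟨?_⟩
  rw [torusMeasure_apply MeasurableSet.univ]
  refine lt_of_le_of_lt (measure_mono ?_)
    (isCompact_closedBall (0 : EuclideanSpace ℝ (Fin N)) (Real.sqrt N)).measure_lt_top
  exact (Set.inter_subset_right).trans (torusBox_subset_ball N)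

lemma continuous_torusQuot (N : ℕ) : Continuous (torusQuot N) := continuous_quotient_mk'

instance torus_compact (N : ℕ) : CompactSpace (Torus N) := by
  refine ⟨?_⟩
  have h2 : Set.univ = torusQuot N '' (Metric.closedBall 0 (Real.sqrt N)) := by
    refine le_antisymm (fun q _ => ?_) (Set.subset_univ _)
    obtain ⟨x, rfl⟩ := QuotientAddGroup.mk_surjective q
    obtain ⟨k, hk, hbox⟩ := exists_lattice_sub_mem_box x
    refine ⟨x - k, torusBox_subset_ball N hbox,
      (QuotientAddGroup.eq_iff_sub_mem.2 (by simpa using neg_mem hk))⟩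
  rw [h2]
  exact (isCompact_closedBall _ _).image (continuous_torusQuot N)

end Auxiliary

/-- Let `E ⊆ 𝕋^N` be a nonempty open set with `μ E = m > 0` and `μ (closure E) = μ E`.
If `δ n → 0`, `δ n > 0`, and `E n` are measurable sets with `μ (E n) = m` whose closures are
contained in the closed `δ n`-neighbourhood of `E`, then
`d_H (closure (E n), closure E) → 0`. -/
theorem hausdorff_convergence_of_measure_and_thickening
    (N : ℕ) (E : Set (Torus N)) (m : ℝ)
    (hEopen : IsOpen E) (hEne : E.Nonempty) (hm : 0 < m)
    (hμE : torusMeasure N E = ENNReal.ofReal m)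
    (hμclos : torusMeasure N (closure E) = torusMeasure N E)
    (δ : ℕ → ℝ) (hδpos : ∀ n, 0 < δ n)
    (hδ : Filter.Tendsto δ Filter.atTop (nhds 0))
    (En : ℕ → Set (Torus N)) (hEnmeas : ∀ n, MeasurableSet (En n))
    (hμEn : ∀ n, torusMeasure N (En n) = ENNReal.ofReal m)
    (hsub : ∀ n, closure (En n) ⊆ Metric.cthickening (δ n) E) :
    Filter.Tendsto (fun n => Metric.hausdorffDist (closure (En n)) (closure E))
      Filter.atTop (nhds 0) := by
  classical
  set μ := torusMeasure N with hμdef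
  have hKc : IsCompact (closure E) := isClosed_closure.isCompact
  have h_thick : Filter.Tendsto (fun n => μ (Metric.cthickening (δ n) E)) Filter.atTop
      (nhds (ENNReal.ofReal m)) := by
    have h := tendsto_measure_cthickening (μ := μ) (s := E)
      ⟨1, one_pos, (measure_lt_top μ _).ne⟩
    rw [hμclos, hμE] at h
    exact h.comp hδ
  rw [tendsto_order]
  constructor
  · intro a ha
    exact Filter.Eventually.of_forall fun n =>
      lt_of_lt_of_le ha Metric.hausdorffDist_nonneg
  · intro ε hε
    have hε8 : 0 < ε / 8 := by linarith
    obtain ⟨t, htE, htcov⟩ := hKc.elim_nhds_subcover (fun y => Metric.ball y (ε/8))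
      (fun y _ => Metric.ball_mem_nhds y hε8)
    have htne : t.Nonempty := by
      obtain ⟨x0, hx0⟩ := hEne
      obtain ⟨y, hy, -⟩ := Set.mem_iUnion₂.1 (htcov (subset_closure hx0))
      exact ⟨y, hy⟩
    set c : ENNReal := t.inf' htne (fun y => μ (E ∩ Metric.ball y (ε/8))) with hc
    have hc_pos : 0 < c := by
      rw [Finset.lt_inf'_iff]
      intro y hy
      refine torusMeasure_pos_of_isOpen (hEopen.inter Metric.isOpen_ball) ?_
      have hyE : y ∈ closure E := htE y hy
      rw [mem_closure_iff] at hyE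
      obtain ⟨x, hx1, hx2⟩ := hyE (Metric.ball y (ε/8)) Metric.isOpen_ball
        (Metric.mem_ball_self hε8)
      exact ⟨x, hx2, hx1⟩
    have hmc : ENNReal.ofReal m < ENNReal.ofReal m + c :=
      ENNReal.lt_add_right ENNReal.ofReal_ne_top hc_pos.ne'
    have h1 : ∀ᶠ n in Filter.atTop, μ (Metric.cthickening (δ n) E) < ENNReal.ofReal m + c :=
      h_thick.eventually_lt_const hmc
    have h2 : ∀ᶠ n in Filter.atTop, δ n < ε / 2 := hδ.eventually_lt_const (by linarith)
    filter_upwards [h1, h2] with n hn1 hn2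
    have hmain : Metric.hausdorffDist (closure (En n)) (closure E) ≤ ε / 2 := by
      refine Metric.hausdorffDist_le_of_mem_dist (by linarith) ?_ ?_
      · intro x hx
        have hx' := hsub n hx
        have hinf : Metric.infDist x E ≤ δ n := by
          rw [Metric.mem_cthickening_iff] at hx'
          exact ENNReal.toReal_le_of_le_ofReal (le_of_lt (hδpos n)) hx'
        obtain ⟨y, hyE, hxy⟩ :=
          (Metric.infDist_lt_iff hEne).1 (lt_of_le_of_lt hinf hn2)
        exact ⟨y, subset_closure hyE, le_of_lt hxy⟩
      · intro y' hy'
        obtain ⟨y, hyt, hy'ball⟩ := Set.mem_iUnion₂.1 (htcov hy')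
        have hney : (En n ∩ Metric.ball y (ε/8)).Nonempty := by
          by_contra hcon
          rw [Set.not_nonempty_iff_eq_empty] at hcon
          have hdisj : Disjoint (En n) (E ∩ Metric.ball y (ε/8)) := by
            rw [Set.disjoint_iff_inter_eq_empty]
            refine Set.eq_empty_of_subset_empty ?_
            rw [← hcon]
            exact fun z hz => ⟨hz.1, hz.2.2⟩
          have hunion_sub : En n ∪ (E ∩ Metric.ball y (ε/8)) ⊆ Metric.cthickening (δ n) E :=
            Set.union_subset (subset_closure.trans (hsub n))
              ((Set.inter_subset_left).trans (Metric.self_subset_cthickening E))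
          have heq : μ (En n ∪ (E ∩ Metric.ball y (ε/8)))
              = μ (En n) + μ (E ∩ Metric.ball y (ε/8)) :=
            measure_union hdisj ((hEopen.inter Metric.isOpen_ball).measurableSet)
          have hle : ENNReal.ofReal m + c ≤ μ (Metric.cthickening (δ n) E) := by
            calc ENNReal.ofReal m + c
                ≤ μ (En n) + μ (E ∩ Metric.ball y (ε/8)) := by
                  refine add_le_add (le_of_eq (hμEn n).symm) ?_
                  exact Finset.inf'_le _ hyt
              _ = μ (En n ∪ (E ∩ Metric.ball y (ε/8))) := heq.symm
              _ ≤ μ (Metric.cthickening (δ n) E) := measure_mono hunion_sub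
          exact absurd hn1 (not_lt.2 hle)
        obtain ⟨x, hxEn, hxball⟩ := hney
        refine ⟨x, subset_closure hxEn, ?_⟩
        have hd1 : dist y' x ≤ dist y' y + dist y x := dist_triangle _ _ _
        have hd2 : dist y' y < ε / 8 := Metric.mem_ball.1 hy'ball
        have hd3 : dist y x < ε / 8 := by
          rw [dist_comm]; exact Metric.mem_ball.1 hxball
        linarith
    linarith [hmain]

end
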